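/- Positive squared magnetisation density implies mass in long cycles: let c > 0, t ≥ 0, n ≥ 1, and suppose E_t((∑_{k=1}^n k²·α_k)·2^α) ≥ c²·n²·Z_n(t). Set ε = c²/2. Then for every integer M ≥ 0 with n > M/ε, ∑_{k=M+1}^n (k/n)·E_t(α_k·2^α) ≥ ε²·Z_n(t). -/

import Mathlib

noncomputable section

/-- `αₖ(π)`: the number of cycles of length `k` of the permutation `π`
(fixed points count as cycles of length 1). -/
def cycCount {n : ℕ} (k : ℕ) (π : Equiv.Perm (Fin n)) : ℕ :=
  if k = 1 then (Finset.univ.filter fun x => π x = x).card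
  else Multiset.count k π.cycleType

/-- `α(π)`: the total number of cycles of `π` (fixed points included). -/
def cycTotal {n : ℕ} (π : Equiv.Perm (Fin n)) : ℕ :=
  Multiset.card π.cycleType + (Finset.univ.filter fun x => π x = x).card

open Classical in
/-- The generator (Laplacian) of the mean-field interchange process on `n` points:
`L(σ,σ) = n(n-1)/2`, `L(σ,τ) = -1` if `τσ⁻¹` is a transposition, and `0` otherwise. -/
def meanFieldL (n : ℕ) : Matrix (Equiv.Perm (Fin n)) (Equiv.Perm (Fin n)) ℝ :=
  Matrix.of fun σ τ =>
    if σ = τ then (n : ℝ) * ((n : ℝ) - 1) / 2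
    else if (τ * σ⁻¹).IsSwap then -1 else 0

/-- `p_t(π)`: the `(identity, π)` entry of `exp(-t L)`, the law at time `t` of the
mean-field interchange process started at the identity. -/
def pt (n : ℕ) (t : ℝ) (π : Equiv.Perm (Fin n)) : ℝ :=
  NormedSpace.exp ((-t) • meanFieldL n) 1 π

/-- `E_t(f) = ∑_π p_t(π) f(π)`. -/
def Et (n : ℕ) (t : ℝ) (f : Equiv.Perm (Fin n) → ℝ) : ℝ :=
  ∑ π : Equiv.Perm (Fin n), pt n t π * f π

/-- The partition function `Z_n(t) = E_t(2^α)`. -/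
def Zfun (n : ℕ) (t : ℝ) : ℝ := Et n t fun π => 2 ^ cycTotal π

/-- The expected squared magnetisation: `m_n(t) ≥ 0` with
`m_n(t)² = E_t((∑_{k=1}^n k² αₖ)·2^α) / Z_n(t)`. -/
def mMag (n : ℕ) (t : ℝ) : ℝ :=
  Real.sqrt (Et n t (fun π =>
    (∑ k ∈ Finset.Icc 1 n, (k : ℝ) ^ 2 * cycCount k π) * 2 ^ cycTotal π) / Zfun n t)



open NormedSpace

open Classical in
private def swapA (n : ℕ) : Matrix (Equiv.Perm (Fin n)) (Equiv.Perm (Fin n)) ℝ :=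
  Matrix.of fun σ τ => if σ = τ then 0 else if (τ * σ⁻¹).IsSwap then 1 else 0

private lemma swapA_nonneg (n : ℕ) (σ τ : Equiv.Perm (Fin n)) : 0 ≤ swapA n σ τ := by
  unfold swapA
  simp only [Matrix.of_apply]
  split_ifs <;> norm_num

private lemma pow_entry_nonneg {m : Type*} [Fintype m] [DecidableEq m] {A : Matrix m m ℝ}
    (hA : ∀ i j, 0 ≤ A i j) (k : ℕ) : ∀ i j, 0 ≤ (A ^ k) i j := by
  induction k with
  | zero => intro i j; rw [pow_zero, Matrix.one_apply]; split_ifs <;> norm_num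
  | succ k ih =>
      intro i j
      rw [pow_succ, Matrix.mul_apply]
      exact Finset.sum_nonneg fun l _ => mul_nonneg (ih i l) (hA l j)

private lemma exp_entry_summable {m : Type*} [Fintype m] [DecidableEq m] (A : Matrix m m ℝ) :
    Summable fun k : ℕ => ((Nat.factorial k : ℝ)⁻¹ • A ^ k) := by
  letI : SeminormedRing (Matrix m m ℝ) := Matrix.linftyOpSemiNormedRing
  letI : NormedRing (Matrix m m ℝ) := Matrix.linftyOpNormedRing
  letI : NormedAlgebra ℝ (Matrix m m ℝ) := Matrix.linftyOpNormedAlgebra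
  exact expSeries_summable' A

private lemma exp_entry_eq {m : Type*} [Fintype m] [DecidableEq m] (A : Matrix m m ℝ) (i j : m) :
    exp A i j = ∑' (k : ℕ), ((Nat.factorial k : ℝ)⁻¹ • A ^ k) i j := by
  have hs := exp_entry_summable A
  have hs2 : Summable fun k : ℕ => ((Nat.factorial k : ℝ)⁻¹ • A ^ k) i := Pi.summable.mp hs i
  rw [exp_eq_tsum ℝ]
  show (∑' (k : ℕ), ((Nat.factorial k : ℝ)⁻¹ • A ^ k)) i j = _
  erw [tsum_apply hs, tsum_apply hs2]

private lemma exp_entry_nonneg {m : Type*} [Fintype m] [DecidableEq m] {A : Matrix m m ℝ}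
    (hA : ∀ i j, 0 ≤ A i j) (i j : m) : 0 ≤ exp A i j := by
  rw [exp_entry_eq]
  refine tsum_nonneg fun k => ?_
  have : ((Nat.factorial k : ℝ)⁻¹ • A ^ k) i j = (Nat.factorial k : ℝ)⁻¹ * (A ^ k) i j := rfl
  rw [this]
  exact mul_nonneg (by positivity) (pow_entry_nonneg hA k i j)

private lemma one_le_exp_diag {m : Type*} [Fintype m] [DecidableEq m] {A : Matrix m m ℝ}
    (hA : ∀ i j, 0 ≤ A i j) (i : m) : 1 ≤ exp A i i := by
  rw [exp_entry_eq]
  have hs : Summable fun k : ℕ => ((Nat.factorial k : ℝ)⁻¹ • A ^ k) i i := by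
    have hs := exp_entry_summable A
    exact Pi.summable.mp (Pi.summable.mp hs i) i
  have h0 : ((Nat.factorial 0 : ℝ)⁻¹ • A ^ 0) i i = 1 := by
    simp [Matrix.one_apply]
  calc (1:ℝ) = ((Nat.factorial 0 : ℝ)⁻¹ • A ^ 0) i i := h0.symm
    _ ≤ _ := Summable.le_tsum hs 0 fun k _ => by
        have : ((Nat.factorial k : ℝ)⁻¹ • A ^ k) i i = (Nat.factorial k : ℝ)⁻¹ * (A ^ k) i i := rfl
        rw [this]
        exact mul_nonneg (by positivity) (pow_entry_nonneg hA k i i)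

private lemma neg_smul_L_eq (n : ℕ) (t : ℝ) :
    (-t) • meanFieldL n
      = algebraMap ℝ (Matrix (Equiv.Perm (Fin n)) (Equiv.Perm (Fin n)) ℝ)
          (-(t * ((n : ℝ) * ((n : ℝ) - 1) / 2))) + t • swapA n := by
  ext σ τ
  simp only [Matrix.smul_apply, Matrix.add_apply, Matrix.algebraMap_matrix_apply,
    meanFieldL, swapA, Matrix.of_apply]
  split_ifs <;> simp <;> ring

private lemma pt_eq (n : ℕ) (t : ℝ) (π : Equiv.Perm (Fin n)) :
    pt n t π = Real.exp (-(t * ((n : ℝ) * ((n : ℝ) - 1) / 2))) * exp (t • swapA n) 1 π := by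
  unfold pt
  rw [neg_smul_L_eq]
  rw [Matrix.exp_add_of_commute _ _ (Algebra.commute_algebraMap_left _ _)]
  letI : SeminormedRing (Matrix (Equiv.Perm (Fin n)) (Equiv.Perm (Fin n)) ℝ) :=
    Matrix.linftyOpSemiNormedRing
  letI : NormedRing (Matrix (Equiv.Perm (Fin n)) (Equiv.Perm (Fin n)) ℝ) :=
    Matrix.linftyOpNormedRing
  letI : NormedAlgebra ℝ (Matrix (Equiv.Perm (Fin n)) (Equiv.Perm (Fin n)) ℝ) :=
    Matrix.linftyOpNormedAlgebra
  erw [← algebraMap_exp_comm, Algebra.algebraMap_eq_smul_one, smul_one_mul]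
  rw [Matrix.smul_apply, smul_eq_mul]
  rw [Real.exp_eq_exp_ℝ]

private lemma pt_nonneg (n : ℕ) {t : ℝ} (ht : 0 ≤ t) (π : Equiv.Perm (Fin n)) : 0 ≤ pt n t π := by
  rw [pt_eq]
  refine mul_nonneg (Real.exp_pos _).le (exp_entry_nonneg (fun i j => ?_) _ _)
  exact mul_nonneg ht (swapA_nonneg n i j)

private lemma pt_one_pos (n : ℕ) {t : ℝ} (ht : 0 ≤ t) : 0 < pt n t 1 := by
  rw [pt_eq]
  refine mul_pos (Real.exp_pos _) (lt_of_lt_of_le one_pos ?_)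
  exact one_le_exp_diag (fun i j => mul_nonneg ht (swapA_nonneg n i j)) 1

private lemma Zfun_pos (n : ℕ) {t : ℝ} (ht : 0 ≤ t) : 0 < Zfun n t := by
  unfold Zfun Et
  refine Finset.sum_pos' (fun π _ => mul_nonneg (pt_nonneg n ht π) (by positivity))
    ⟨1, Finset.mem_univ _, mul_pos (pt_one_pos n ht) (by positivity)⟩

private lemma Et_mono (n : ℕ) {t : ℝ} (ht : 0 ≤ t) {f g : Equiv.Perm (Fin n) → ℝ}
    (h : ∀ π, f π ≤ g π) : Et n t f ≤ Et n t g :=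
  Finset.sum_le_sum fun π _ => mul_le_mul_of_nonneg_left (h π) (pt_nonneg n ht π)

private lemma Et_smul (n : ℕ) (t : ℝ) (a : ℝ) (f : Equiv.Perm (Fin n) → ℝ) :
    Et n t (fun π => a * f π) = a * Et n t f := by
  unfold Et
  rw [Finset.mul_sum]
  exact Finset.sum_congr rfl fun π _ => by ring

private lemma Et_add (n : ℕ) (t : ℝ) (f g : Equiv.Perm (Fin n) → ℝ) :
    Et n t (fun π => f π + g π) = Et n t f + Et n t g := by
  unfold Et
  rw [← Finset.sum_add_distrib]
  exact Finset.sum_congr rfl fun π _ => by ring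

private lemma Et_sum {ι : Type*} (n : ℕ) (t : ℝ) (s : Finset ι)
    (F : ι → Equiv.Perm (Fin n) → ℝ) :
    Et n t (fun π => ∑ k ∈ s, F k π) = ∑ k ∈ s, Et n t (F k) := by
  unfold Et
  simp_rw [Finset.mul_sum]
  rw [Finset.sum_comm]

private lemma sum_k_cycCount (n : ℕ) (hn : 1 ≤ n) (π : Equiv.Perm (Fin n)) :
    ∑ k ∈ Finset.Icc 1 n, k * cycCount k π = n := by
  classical
  have h1 : Finset.Icc 1 n = Finset.Ioc 0 n := by rw [← Finset.Icc_add_one_left_eq_Ioc, zero_add]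
  have hsplit : ∑ k ∈ Finset.Ioc 0 1, k * cycCount k π + ∑ k ∈ Finset.Ioc 1 n, k * cycCount k π
      = ∑ k ∈ Finset.Ioc 0 n, k * cycCount k π :=
    Finset.sum_Ioc_consecutive _ (Nat.zero_le 1) hn
  have hIoc01 : Finset.Ioc 0 1 = {1} := rfl
  have hfix : ∑ k ∈ Finset.Ioc 0 1, k * cycCount k π
      = (Finset.univ.filter fun x => π x = x).card := by
    rw [hIoc01, Finset.sum_singleton]
    simp [cycCount]
  have hsub : π.cycleType.toFinset ⊆ Finset.Ioc 1 n := by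
    intro a ha
    rw [Multiset.mem_toFinset] at ha
    rw [Finset.mem_Ioc]
    constructor
    · exact lt_of_lt_of_le one_lt_two (Equiv.Perm.two_le_of_mem_cycleType ha)
    · calc a ≤ π.cycleType.sum := Multiset.single_le_sum (fun _ _ => Nat.zero_le _) a ha
        _ = π.support.card := π.sum_cycleType
        _ ≤ Fintype.card (Fin n) := Finset.card_le_univ _
        _ = n := Fintype.card_fin n
  have hcyc : ∑ k ∈ Finset.Ioc 1 n, k * cycCount k π = π.cycleType.sum := by
    have hmap : π.cycleType.sum = ∑ a ∈ π.cycleType.toFinset, π.cycleType.count a • a := by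
      conv_lhs => rw [← Multiset.map_id π.cycleType]
      exact Finset.sum_multiset_map_count _ _
    rw [hmap]
    rw [Finset.sum_subset hsub]
    · refine Finset.sum_congr rfl fun k hk => ?_
      have hk1 : k ≠ 1 := by
        rw [Finset.mem_Ioc] at hk; omega
      simp [cycCount, hk1, smul_eq_mul, Nat.mul_comm]
    · intro k _ hk
      have : π.cycleType.count k = 0 := by
        rw [Multiset.count_eq_zero]
        rw [Multiset.mem_toFinset] at hk; exact hk
      simp [this]
  have hsupp : π.support.card + (Finset.univ.filter fun x => π x = x).card = n := by
    have := Finset.card_filter_add_card_filter_not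
      (s := (Finset.univ : Finset (Fin n))) (p := fun x => π x = x)
    have hs : π.support = Finset.univ.filter fun x => ¬ π x = x := rfl
    rw [hs]
    rw [Finset.card_univ, Fintype.card_fin] at this
    omega
  rw [h1, ← hsplit, hfix, hcyc, π.sum_cycleType]
  omega

private lemma sum_k_cycCount_real (n : ℕ) (hn : 1 ≤ n) (π : Equiv.Perm (Fin n)) :
    ∑ k ∈ Finset.Icc 1 n, (k : ℝ) * (cycCount k π : ℝ) = n := by
  have h := sum_k_cycCount n hn π
  have h2 : ((∑ k ∈ Finset.Icc 1 n, k * cycCount k π : ℕ) : ℝ) = n := by rw [h]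
  rw [← h2]
  push_cast
  rfl


/-- Positive squared magnetisation density implies mass in long cycles: if
`E_t((∑ k² αₖ)·2^α) ≥ c² n² Z_n(t)` then, with `ε = c²/2`, for every `M` with `n > M/ε`
one has `∑_{k=M+1}^n (k/n) E_t(αₖ 2^α) ≥ ε² Z_n(t)`. -/
theorem mass_in_long_cycles (n : ℕ) (hn : 1 ≤ n) (t : ℝ) (ht : 0 ≤ t) (c : ℝ) (hc : 0 < c)
    (hmag : Et n t (fun π =>
        (∑ k ∈ Finset.Icc 1 n, (k : ℝ) ^ 2 * cycCount k π) * 2 ^ cycTotal π)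
      ≥ c ^ 2 * n ^ 2 * Zfun n t) :
    ∀ M : ℕ, (M : ℝ) / (c ^ 2 / 2) < n →
      ∑ k ∈ Finset.Icc (M + 1) n, ((k : ℝ) / n) *
          Et n t (fun π => (cycCount k π : ℝ) * 2 ^ cycTotal π)
        ≥ (c ^ 2 / 2) ^ 2 * Zfun n t := by
  intro M hM
  have hn0 : (0:ℝ) < n := by exact_mod_cast hn
  have hZ : 0 < Zfun n t := Zfun_pos n ht
  have hεpos : (0:ℝ) < c ^ 2 / 2 := by positivity
  -- pointwise bound S(π) ≤ n², hence c² ≤ 1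
  have hS_le : ∀ π : Equiv.Perm (Fin n),
      ∑ k ∈ Finset.Icc 1 n, (k : ℝ) ^ 2 * cycCount k π ≤ (n : ℝ) ^ 2 := by
    intro π
    calc ∑ k ∈ Finset.Icc 1 n, (k : ℝ) ^ 2 * cycCount k π
        ≤ ∑ k ∈ Finset.Icc 1 n, (n : ℝ) * ((k : ℝ) * cycCount k π) := by
          refine Finset.sum_le_sum fun k hk => ?_
          have hkn : (k : ℝ) ≤ n := by exact_mod_cast (Finset.mem_Icc.mp hk).2
          have hpos : (0:ℝ) ≤ (k : ℝ) * cycCount k π := by positivity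
          rw [pow_two, mul_assoc]
          exact mul_le_mul_of_nonneg_right hkn hpos
      _ = (n : ℝ) * ∑ k ∈ Finset.Icc 1 n, (k : ℝ) * cycCount k π := (Finset.mul_sum _ _ _).symm
      _ = (n : ℝ) * n := by rw [sum_k_cycCount_real n hn π]
      _ = (n : ℝ) ^ 2 := (sq (n:ℝ)).symm
  have hEn2 : Et n t (fun π =>
      (∑ k ∈ Finset.Icc 1 n, (k : ℝ) ^ 2 * cycCount k π) * 2 ^ cycTotal π)
      ≤ (n : ℝ) ^ 2 * Zfun n t := by
    rw [Zfun, ← Et_smul]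
    exact Et_mono n ht fun π => mul_le_mul_of_nonneg_right (hS_le π) (by positivity)
  have hc1 : c ^ 2 ≤ 1 := by
    have h := le_trans hmag hEn2
    have hn2Z : 0 < (n : ℝ) ^ 2 * Zfun n t := by positivity
    nlinarith
  -- consequences of the assumption on M
  have hMε : (M : ℝ) < (c ^ 2 / 2) * n := by
    rw [div_lt_iff₀ hεpos] at hM
    linarith
  have hMltn : (M : ℝ) < n := by nlinarith
  have hMn : M ≤ n := by exact_mod_cast hMltn.le
  -- pointwise splitting bound
  have hpw : ∀ π : Equiv.Perm (Fin n),
      ∑ k ∈ Finset.Icc 1 n, (k : ℝ) ^ 2 * cycCount k π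
        ≤ (M : ℝ) * n + (n : ℝ) * ∑ k ∈ Finset.Icc (M + 1) n, (k : ℝ) * cycCount k π := by
    intro π
    have h1 : Finset.Icc 1 n = Finset.Ioc 0 n := by rw [← Finset.Icc_add_one_left_eq_Ioc, zero_add]
    have h2 : Finset.Icc (M + 1) n = Finset.Ioc M n := by rw [← Finset.Icc_add_one_left_eq_Ioc]
    have hsplit : ∑ k ∈ Finset.Ioc 0 M, (k : ℝ) ^ 2 * cycCount k π
        + ∑ k ∈ Finset.Ioc M n, (k : ℝ) ^ 2 * cycCount k π
        = ∑ k ∈ Finset.Ioc 0 n, (k : ℝ) ^ 2 * cycCount k π :=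
      Finset.sum_Ioc_consecutive _ (Nat.zero_le M) hMn
    rw [h1, h2, ← hsplit]
    have hb1 : ∑ k ∈ Finset.Ioc 0 M, (k : ℝ) ^ 2 * cycCount k π ≤ (M : ℝ) * n := by
      calc ∑ k ∈ Finset.Ioc 0 M, (k : ℝ) ^ 2 * cycCount k π
          ≤ ∑ k ∈ Finset.Ioc 0 M, (M : ℝ) * ((k : ℝ) * cycCount k π) := by
            refine Finset.sum_le_sum fun k hk => ?_
            have hkM : (k : ℝ) ≤ M := by exact_mod_cast (Finset.mem_Ioc.mp hk).2
            have hpos : (0:ℝ) ≤ (k : ℝ) * cycCount k π := by positivity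
            rw [pow_two, mul_assoc]
            exact mul_le_mul_of_nonneg_right hkM hpos
        _ = (M : ℝ) * ∑ k ∈ Finset.Ioc 0 M, (k : ℝ) * cycCount k π := (Finset.mul_sum _ _ _).symm
        _ ≤ (M : ℝ) * ∑ k ∈ Finset.Ioc 0 n, (k : ℝ) * cycCount k π := by
            refine mul_le_mul_of_nonneg_left ?_ (Nat.cast_nonneg M)
            refine Finset.sum_le_sum_of_subset_of_nonneg
              (Finset.Ioc_subset_Ioc_right hMn) fun k _ _ => by positivity
        _ = (M : ℝ) * n := by rw [← h1, sum_k_cycCount_real n hn π]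
    have hb2 : ∑ k ∈ Finset.Ioc M n, (k : ℝ) ^ 2 * cycCount k π
        ≤ (n : ℝ) * ∑ k ∈ Finset.Ioc M n, (k : ℝ) * cycCount k π := by
      rw [Finset.mul_sum]
      refine Finset.sum_le_sum fun k hk => ?_
      have hkn : (k : ℝ) ≤ n := by exact_mod_cast (Finset.mem_Ioc.mp hk).2
      have hpos : (0:ℝ) ≤ (k : ℝ) * cycCount k π := by positivity
      rw [pow_two, mul_assoc]
      exact mul_le_mul_of_nonneg_right hkn hpos
    linarith
  -- Et-level bound
  set B := ∑ k ∈ Finset.Icc (M + 1) n, (k : ℝ) *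
      Et n t (fun π => (cycCount k π : ℝ) * 2 ^ cycTotal π) with hB
  have hEB : Et n t (fun π =>
      (∑ k ∈ Finset.Icc 1 n, (k : ℝ) ^ 2 * cycCount k π) * 2 ^ cycTotal π)
      ≤ (M : ℝ) * n * Zfun n t + (n : ℝ) * B := by
    have step1 : Et n t (fun π =>
        (∑ k ∈ Finset.Icc 1 n, (k : ℝ) ^ 2 * cycCount k π) * 2 ^ cycTotal π)
        ≤ Et n t (fun π =>
          ((M : ℝ) * n + (n : ℝ) * ∑ k ∈ Finset.Icc (M + 1) n, (k : ℝ) * cycCount k π)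
            * 2 ^ cycTotal π) :=
      Et_mono n ht fun π => mul_le_mul_of_nonneg_right (hpw π) (by positivity)
    have step2 : Et n t (fun π =>
        ((M : ℝ) * n + (n : ℝ) * ∑ k ∈ Finset.Icc (M + 1) n, (k : ℝ) * cycCount k π)
          * 2 ^ cycTotal π) = (M : ℝ) * n * Zfun n t + (n : ℝ) * B := by
      have hfun : ∀ π : Equiv.Perm (Fin n),
          ((M : ℝ) * n + (n : ℝ) * ∑ k ∈ Finset.Icc (M + 1) n, (k : ℝ) * cycCount k π)
            * 2 ^ cycTotal π
          = (M : ℝ) * n * (2 ^ cycTotal π)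
            + (n : ℝ) * ∑ k ∈ Finset.Icc (M + 1) n,
                (k : ℝ) * ((cycCount k π : ℝ) * 2 ^ cycTotal π) := by
        intro π
        rw [Finset.mul_sum, Finset.mul_sum, add_mul, Finset.sum_mul]
        congr 1
        exact Finset.sum_congr rfl fun k _ => by ring
      calc Et n t (fun π =>
          ((M : ℝ) * n + (n : ℝ) * ∑ k ∈ Finset.Icc (M + 1) n, (k : ℝ) * cycCount k π)
            * 2 ^ cycTotal π)
          = Et n t (fun π => (M : ℝ) * n * (2 ^ cycTotal π)
              + (n : ℝ) * ∑ k ∈ Finset.Icc (M + 1) n,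
                  (k : ℝ) * ((cycCount k π : ℝ) * 2 ^ cycTotal π)) := by
            congr 1; funext π; exact hfun π
        _ = Et n t (fun π => (M : ℝ) * n * (2 ^ cycTotal π))
            + Et n t (fun π => (n : ℝ) * ∑ k ∈ Finset.Icc (M + 1) n,
                (k : ℝ) * ((cycCount k π : ℝ) * 2 ^ cycTotal π)) := Et_add n t _ _
        _ = (M : ℝ) * n * Zfun n t + (n : ℝ) * B := by
            rw [Et_smul, Et_smul, Et_sum, Zfun]
            congr 2
            exact Finset.sum_congr rfl fun k _ => (Et_smul n t _ _)
    exact step1.trans_eq step2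
  -- final arithmetic
  have hchain : c ^ 2 * n ^ 2 * Zfun n t ≤ (M : ℝ) * n * Zfun n t + (n : ℝ) * B :=
    le_trans hmag hEB
  have hTB : ∑ k ∈ Finset.Icc (M + 1) n, ((k : ℝ) / n) *
      Et n t (fun π => (cycCount k π : ℝ) * 2 ^ cycTotal π) = B / n := by
    rw [hB, Finset.sum_div]
    exact Finset.sum_congr rfl fun k _ => by ring
  rw [ge_iff_le, hTB, le_div_iff₀ hn0]
  have hMZ : (M : ℝ) * n * Zfun n t ≤ (c ^ 2 / 2) * n * (n * Zfun n t) := by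
    have : (0:ℝ) ≤ n * Zfun n t := by positivity
    calc (M : ℝ) * n * Zfun n t = (M : ℝ) * (n * Zfun n t) := by ring
      _ ≤ ((c ^ 2 / 2) * n) * (n * Zfun n t) := mul_le_mul_of_nonneg_right hMε.le this
      _ = (c ^ 2 / 2) * n * (n * Zfun n t) := rfl
  nlinarith [hZ, hn0, sq_nonneg ((n:ℝ) * Zfun n t), mul_pos hn0 hZ,
    mul_pos (mul_pos hn0 hn0) hZ]


end
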